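/- Any infinite graph G = (V, E) that contains no independent set of cardinality |V| contains an infinite complete subgraph. (Erdős–Dushnik–Miller) -/

import Mathlib

open Cardinal Set

universe u

variable {V : Type u}

section EDMHelpers


/-- Zorn: maximal independent subset of `W`. -/
lemma edm_zorn (G : SimpleGraph V) (W : Set V) :
    ∃ I, I ⊆ W ∧ I.Pairwise (fun a b => ¬G.Adj a b) ∧
      ∀ v ∈ W, v ∉ I → ∃ u ∈ I, G.Adj u v := by
  have hch : ∀ c ⊆ {I : Set V | I ⊆ W ∧ I.Pairwise fun a b => ¬G.Adj a b},
      IsChain (· ⊆ ·) c → ∃ ub ∈ {I : Set V | I ⊆ W ∧ I.Pairwise fun a b => ¬G.Adj a b},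
        ∀ s ∈ c, s ⊆ ub := by
    intro c hcS hchain
    refine ⟨⋃₀ c, ⟨sUnion_subset fun s hs => (hcS hs).1, ?_⟩, fun s hs => subset_sUnion_of_mem hs⟩
    intro x hx y hy hne
    obtain ⟨s, hs, hxs⟩ := hx
    obtain ⟨t, ht, hyt⟩ := hy
    rcases eq_or_ne s t with rfl | hst
    · exact (hcS hs).2 hxs hyt hne
    · rcases hchain hs ht hst with h | h
      · exact (hcS ht).2 (h hxs) hyt hne
      · exact (hcS hs).2 hxs (h hyt) hne
  obtain ⟨I, hI⟩ := zorn_subset {I : Set V | I ⊆ W ∧ I.Pairwise fun a b => ¬G.Adj a b} hch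
  refine ⟨I, hI.prop.1, hI.prop.2, ?_⟩
  intro v hvW hvI
  by_contra hno
  push_neg at hno
  have hmem : insert v I ∈ {I : Set V | I ⊆ W ∧ I.Pairwise fun a b => ¬G.Adj a b} := by
    refine ⟨insert_subset hvW hI.prop.1, ?_⟩
    rw [Set.pairwise_insert]
    refine ⟨hI.prop.2, fun b hb _ => ⟨fun h => hno b hb h.symm, fun h => hno b hb h⟩⟩
  have := hI.2 hmem (subset_insert v I)
  exact hvI (this (mem_insert v I))

/-- A sup of fewer than `cof κ.ord` many cardinals `< κ` is `< κ`. -/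
lemma edm_sup_lt {ι : Type u} {κ : Cardinal.{u}} (hι : #ι < κ.ord.cof) {f : ι → Cardinal.{u}}
    (hf : ∀ i, f i < κ) : (⨆ i, f i) < κ := by
  have h1 : (⨆ i, (f i).ord) < κ.ord :=
    Ordinal.iSup_lt_ord hι fun i => Cardinal.ord_lt_ord.mpr (hf i)
  have h2 : ∀ i, f i ≤ (⨆ i, (f i).ord).card := by
    intro i
    have : (f i).ord ≤ ⨆ i, (f i).ord := le_ciSup (Ordinal.bddAbove_range _) i
    simpa using Ordinal.card_le_card this
  exact lt_of_le_of_lt (ciSup_le' h2) (Cardinal.lt_ord.mp h1)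

/-- The sets of vertices of bounded degree are unbounded in size. -/
lemma edm_levels {κ : Cardinal.{u}} (W : Set V) (hW : κ ≤ #W) (d : V → Cardinal.{u})
    (hd : ∀ v ∈ W, d v < κ) {c : Cardinal.{u}} (hc : c < κ) (hcinf : ℵ₀ ≤ c) :
    ∃ ρ < κ, c < #{v ∈ W | d v ≤ ρ} := by
  by_contra hcon
  push_neg at hcon
  rcases eq_or_lt_of_le (Order.succ_le_of_lt hc) with hsucc | hsucc
  · have hWlev : W ⊆ {v ∈ W | d v ≤ c} := fun v hv =>
      ⟨hv, Order.lt_succ_iff.mp (hsucc ▸ hd v hv)⟩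
    have h1 : κ ≤ #{v ∈ W | d v ≤ c} := hW.trans (mk_le_mk_of_subset hWlev)
    exact absurd (h1.trans (hcon c hc)) (not_le.mpr hc)
  · obtain ⟨Z, hZW, hZ⟩ := le_mk_iff_exists_subset.mp ((hsucc.trans_le hW).le)
    have hcover : W ⊆ ⋃ v ∈ Z, {w ∈ W | d w ≤ d v} := by
      intro w hw
      by_contra hnw
      simp only [mem_iUnion, mem_setOf_eq, not_exists, mem_sep_iff] at hnw
      have hZsub : Z ⊆ {v ∈ W | d v ≤ d w} := by
        intro v hv
        exact ⟨hZW hv, le_of_not_ge fun h => hnw v hv ⟨hw, h⟩⟩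
      have h1 : Order.succ c ≤ #{v ∈ W | d v ≤ d w} := hZ ▸ mk_le_mk_of_subset hZsub
      exact absurd (h1.trans (hcon (d w) (hd w hw))) (not_le.mpr (Order.lt_succ c))
    have hb : #W ≤ #Z * ⨆ v : Z, #{w ∈ W | d w ≤ d (v : V)} :=
      (mk_le_mk_of_subset hcover).trans (mk_biUnion_le _ _)
    have hsup : (⨆ v : Z, #{w ∈ W | d w ≤ d (v : V)}) ≤ c :=
      ciSup_le' fun v => hcon (d v) (hd v (hZW v.2))
    have : κ ≤ Order.succ c * c := by
      calc κ ≤ #W := hW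
        _ ≤ #Z * ⨆ v : Z, #{w ∈ W | d w ≤ d (v : V)} := hb
        _ ≤ Order.succ c * c := mul_le_mul' (le_of_eq hZ) hsup
    rw [Cardinal.mul_eq_max (hcinf.trans (le_of_lt (Order.lt_succ c))) hcinf,
      max_eq_left (le_of_lt (Order.lt_succ c))] at this
    exact absurd (this.trans_lt hsucc) (lt_irrefl κ)


/-- From no infinite clique: a full-size set `W` in which every vertex has
small degree. -/
lemma edm_W {κ : Cardinal.{u}} (_hκ : ℵ₀ ≤ κ) (G : SimpleGraph V) (A : Set V) (hA : #A = κ)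
    (hcl : ∀ H : Set V, H ⊆ A → H.Infinite → ¬ H.Pairwise G.Adj) :
    ∃ W, W ⊆ A ∧ #W = κ ∧ ∀ v ∈ W, #{w ∈ W | G.Adj v w} < κ := by
  classical
  set Ns : Finset V → Set V := fun s => {w ∈ A | ∀ u ∈ s, G.Adj w u} with hNs
  set P : Finset V → Prop := fun s => ↑s ⊆ A ∧ (↑s : Set V).Pairwise G.Adj ∧ #(Ns s) = κ
    with hP
  have base : P ∅ := by
    refine ⟨by simp, by simp, ?_⟩
    have : Ns ∅ = A := by ext w; simp [hNs]
    rw [this, hA]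
  by_cases hstep : ∀ s, P s → ∃ v ∈ Ns s, P (insert v s)
  · -- build an infinite clique, contradiction
    exfalso
    choose! f hf1 hf2 using hstep
    let g : ℕ → {s : Finset V // P s} := fun n =>
      Nat.rec ⟨∅, base⟩ (fun _ p => ⟨insert (f p.1 p.2) p.1, hf2 p.1 p.2⟩) n
    let v : ℕ → V := fun n => f (g n).1 (g n).2
    have hg : ∀ n, (g (n + 1)).1 = insert (v n) (g n).1 := fun n => rfl
    have hvN : ∀ n, v n ∈ Ns (g n).1 := fun n => hf1 (g n).1 (g n).2
    have hvadj : ∀ n, ∀ u ∈ (g n).1, G.Adj (v n) u := fun n u hu => (hvN n).2 u hu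
    have hvnot : ∀ n, v n ∉ (g n).1 := fun n h => G.irrefl (hvadj n _ h)
    have hmono : ∀ m n, m ≤ n → (g m).1 ⊆ (g n).1 := by
      intro m n h
      induction n with
      | zero => simp_all
      | succ k ih =>
        rcases Nat.lt_or_ge m (k + 1) with h' | h'
        · exact (ih (Nat.lt_succ_iff.mp h')).trans (by rw [hg]; exact Finset.subset_insert _ _)
        · have : m = k + 1 := le_antisymm h h'
          subst this; exact Finset.Subset.refl _
    have hvmem : ∀ m n, m < n → v m ∈ (g n).1 := by
      intro m n h
      have : v m ∈ (g (m + 1)).1 := by rw [hg]; exact Finset.mem_insert_self _ _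
      exact hmono (m + 1) n h this
    have hinj : Function.Injective v := by
      intro m n h
      by_contra hne
      rcases Nat.lt_or_ge m n with h' | h'
      · exact hvnot n (h ▸ hvmem m n h')
      · exact hvnot m (h ▸ hvmem n m (lt_of_le_of_ne h' (Ne.symm hne)))
    refine hcl (Set.range v) ?_ (Set.infinite_range_of_injective hinj) ?_
    · rintro x ⟨n, rfl⟩; exact (hvN n).1
    · rintro x ⟨m, rfl⟩ y ⟨n, rfl⟩ hne
      rcases Nat.lt_or_ge m n with h' | h'
      · exact (hvadj n _ (hvmem m n h')).symm
      · have h'' : n < m := lt_of_le_of_ne h' fun h => hne (by rw [h])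
        exact hvadj m _ (hvmem n m h'')
  · push_neg at hstep
    obtain ⟨s, hs, hmax⟩ := hstep
    refine ⟨Ns s, fun w hw => hw.1, hs.2.2, ?_⟩
    intro x hx
    have h1 : ↑(insert x s) ⊆ A := by
      rw [Finset.coe_insert]
      exact insert_subset hx.1 hs.1
    have h2 : (↑(insert x s) : Set V).Pairwise G.Adj := by
      rw [Finset.coe_insert, Set.pairwise_insert]
      exact ⟨hs.2.1, fun u hu _ => ⟨hx.2 u hu, (hx.2 u hu).symm⟩⟩
    have h3 : #(Ns (insert x s)) ≠ κ := fun hc => hmax x hx ⟨h1, h2, hc⟩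
    have hsub : {w ∈ Ns s | G.Adj x w} = Ns (insert x s) := by
      ext w
      simp only [hNs, mem_setOf_eq, mem_sep_iff, Finset.mem_insert]
      constructor
      · rintro ⟨⟨hwA, hws⟩, hadj⟩
        exact ⟨hwA, fun u hu => hu.elim (fun h => h ▸ hadj.symm) (hws u)⟩
      · rintro ⟨hwA, hall⟩
        exact ⟨⟨hwA, fun u hu => hall u (Or.inr hu)⟩, (hall x (Or.inl rfl)).symm⟩
    rw [hsub]
    have hle : #(Ns (insert x s)) ≤ κ := by
      rw [← hs.2.2]
      apply mk_le_mk_of_subset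
      intro w hw
      exact ⟨hw.1, fun u hu => hw.2 u (Finset.mem_insert_of_mem hu)⟩
    exact lt_of_le_of_ne hle h3

theorem edm_key (κ : Cardinal.{u}) : ∀ (V : Type u) (G : SimpleGraph V) (A : Set V),
    ℵ₀ ≤ κ → #A = κ → (∀ H : Set V, H ⊆ A → H.Infinite → ¬ H.Pairwise G.Adj) →
    ∃ S, S ⊆ A ∧ #S = κ ∧ S.Pairwise (fun a b => ¬G.Adj a b) := by
  refine Cardinal.lt_wf.induction (C := fun κ => ∀ (V : Type u) (G : SimpleGraph V)
    (A : Set V), ℵ₀ ≤ κ → #A = κ → (∀ H : Set V, H ⊆ A → H.Infinite → ¬ H.Pairwise G.Adj) →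
    ∃ S, S ⊆ A ∧ #S = κ ∧ S.Pairwise (fun a b => ¬G.Adj a b)) κ ?_
  intro κ IH V G A hκ hA hcl
  obtain ⟨W, hWA, hWκ, hdW⟩ := edm_W hκ G A hA hcl
  rcases eq_or_lt_of_le hκ with hω | hω
  · -- κ = ℵ₀ : a maximal independent set is infinite
    obtain ⟨I, hIW, hIind, hImax⟩ := edm_zorn G W
    have hIinf : I.Infinite := by
      by_contra hfin
      rw [Set.not_infinite] at hfin
      have hcov : W ⊆ I ∪ ⋃ u ∈ I, {w ∈ W | G.Adj u w} := by
        intro w hw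
        by_cases hwI : w ∈ I
        · exact Or.inl hwI
        · obtain ⟨u, huI, hadj⟩ := hImax w hw hwI
          exact Or.inr (mem_biUnion huI ⟨hw, hadj⟩)
      have hWfin : W.Finite := by
        refine Set.Finite.subset (hfin.union (hfin.biUnion ?_)) hcov
        intro u hu
        have h1 := hdW u (hIW hu)
        rw [← hω] at h1
        exact Cardinal.lt_aleph0_iff_set_finite.mp h1
      have h2 : #W < ℵ₀ := Cardinal.lt_aleph0_iff_set_finite.mpr hWfin
      rw [hWκ, ← hω] at h2
      exact lt_irrefl _ h2
    refine ⟨I, hIW.trans hWA, le_antisymm (hWκ ▸ mk_le_mk_of_subset hIW) ?_, hIind⟩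
    rw [← hω]
    exact Cardinal.aleph0_le_mk_iff.mpr (Set.infinite_coe_iff.mpr hIinf)
  · by_cases hbig : ∃ ρ, ρ < κ ∧ #{v ∈ W | #{w ∈ W | G.Adj v w} ≤ ρ} = κ
    · -- Case A: bounded degrees on a full-size set; Zorn + counting
      obtain ⟨ρ, hρ, hC⟩ := hbig
      set C := {v ∈ W | #{w ∈ W | G.Adj v w} ≤ ρ} with hCdef
      obtain ⟨I, hIC, hIind, hImax⟩ := edm_zorn G C
      have hCW : C ⊆ W := sep_subset _ _
      have hIκ : #I = κ := by
        by_contra hne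
        have hIlt : #I < κ := lt_of_le_of_ne (hC ▸ mk_le_mk_of_subset hIC) hne
        have hcov : C ⊆ I ∪ ⋃ u ∈ I, {w ∈ C | G.Adj u w} := by
          intro w hw
          by_cases hwI : w ∈ I
          · exact Or.inl hwI
          · obtain ⟨u, huI, hadj⟩ := hImax w hw hwI
            exact Or.inr (mem_biUnion huI ⟨hw, hadj⟩)
        have h1 : #C ≤ #I + #(↥(⋃ u ∈ I, {w ∈ C | G.Adj u w})) :=
          (mk_le_mk_of_subset hcov).trans (mk_union_le _ _)
        have h2 : #(↥(⋃ u ∈ I, {w ∈ C | G.Adj u w})) ≤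
            #I * ⨆ u : I, #{w ∈ C | G.Adj (u : V) w} := mk_biUnion_le _ _
        have h3 : (⨆ u : I, #{w ∈ C | G.Adj (u : V) w}) ≤ ρ := by
          refine ciSup_le' fun u => ?_
          have hsub : {w ∈ C | G.Adj (u : V) w} ⊆ {w ∈ W | G.Adj (u : V) w} :=
            fun w hw => ⟨hw.1.1, hw.2⟩
          exact (mk_le_mk_of_subset hsub).trans (hIC u.2).2
        have h4 : #C < κ :=
          lt_of_le_of_lt (h1.trans (add_le_add_right (h2.trans (mul_le_mul_right h3 _)) _))
            (Cardinal.add_lt_of_lt hκ hIlt (Cardinal.mul_lt_of_lt hκ hIlt hρ))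
        exact absurd hC h4.ne
      exact ⟨I, (hIC.trans hCW).trans hWA, hIκ, hIind⟩
    · -- Case B
      push_neg at hbig
      have hlev : ∀ ρ, ρ < κ → #{v ∈ W | #{w ∈ W | G.Adj v w} ≤ ρ} < κ := fun ρ hρ =>
        lt_of_le_of_ne (hWκ ▸ mk_le_mk_of_subset (sep_subset _ _)) (hbig ρ hρ)
      have hlimit : ∀ c, c < κ → Order.succ c < κ := by
        intro c hc
        rcases lt_or_eq_of_le (Order.succ_le_of_lt hc) with h | h
        · exact h
        · exfalso
          have hWsub : W ⊆ {v ∈ W | #{w ∈ W | G.Adj v w} ≤ c} := fun v hv =>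
            ⟨hv, Order.lt_succ_iff.mp (h ▸ hdW v hv)⟩
          exact absurd ((hWκ ▸ mk_le_mk_of_subset hWsub).trans_lt (hlev c hc)) (lt_irrefl κ)
      -- one construction step
      have step : ∀ t : Cardinal.{u}, ℵ₀ ≤ t → t < κ → ∀ F : Set V, #F < κ →
          ∃ T : Set V, T ⊆ W ∧ Disjoint T F ∧ T.Pairwise (fun a b => ¬G.Adj a b) ∧ #T = t ∧
            #(↥(T ∪ ⋃ v ∈ T, {w ∈ W | G.Adj v w})) < κ := by
        intro t ht htκ F hF
        have hcκ : max t #F < κ := max_lt htκ hF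
        have hcinf : ℵ₀ ≤ max t #F := ht.trans (le_max_left _ _)
        obtain ⟨ρ, hρ, hCc⟩ :=
          edm_levels W hWκ.ge (fun v => #{w ∈ W | G.Adj v w}) hdW hcκ hcinf
        have hC'κ : #(↥({v ∈ W | #{w ∈ W | G.Adj v w} ≤ ρ} \ F)) < κ :=
          (mk_le_mk_of_subset diff_subset).trans_lt (hlev ρ hρ)
        have hC'c : max t #F < #(↥({v ∈ W | #{w ∈ W | G.Adj v w} ≤ ρ} \ F)) := by
          by_contra hle
          push_neg at hle
          have hsplit : {v ∈ W | #{w ∈ W | G.Adj v w} ≤ ρ} ⊆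
              ({v ∈ W | #{w ∈ W | G.Adj v w} ≤ ρ} \ F) ∪ F := by
            intro v hv
            by_cases hvF : v ∈ F
            · exact Or.inr hvF
            · exact Or.inl ⟨hv, hvF⟩
          have h1 : #{v ∈ W | #{w ∈ W | G.Adj v w} ≤ ρ} ≤ max t #F := by
            calc #{v ∈ W | #{w ∈ W | G.Adj v w} ≤ ρ}
                ≤ #(↥({v ∈ W | #{w ∈ W | G.Adj v w} ≤ ρ} \ F)) + #F :=
                  (mk_le_mk_of_subset hsplit).trans (mk_union_le _ _)
              _ ≤ max t #F + max t #F := add_le_add hle (le_max_right _ _)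
              _ = max t #F := Cardinal.add_eq_self hcinf
          exact absurd (hCc.trans_le h1) (lt_irrefl _)
        have hC'inf : ℵ₀ ≤ #(↥({v ∈ W | #{w ∈ W | G.Adj v w} ≤ ρ} \ F)) :=
          hcinf.trans hC'c.le
        obtain ⟨S', hS'sub, hS'card, hS'ind⟩ := IH _ hC'κ V G _ hC'inf rfl
          (fun H hH hinf => hcl H
            (hH.trans (diff_subset.trans ((sep_subset _ _).trans hWA))) hinf)
        have htS' : t ≤ #S' := by
          rw [hS'card]
          exact ((le_max_left t #F).trans_lt hC'c).le
        obtain ⟨T, hTS', hTcard⟩ := le_mk_iff_exists_subset.mp htS'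
        have hTC' : T ⊆ {v ∈ W | #{w ∈ W | G.Adj v w} ≤ ρ} \ F := hTS'.trans hS'sub
        have hTC : T ⊆ {v ∈ W | #{w ∈ W | G.Adj v w} ≤ ρ} := hTC'.trans diff_subset
        have hTW : T ⊆ W := hTC.trans (sep_subset _ _)
        refine ⟨T, hTW, Set.disjoint_left.mpr fun v hv hvF => (hTC' hv).2 hvF,
          hS'ind.mono hTS', hTcard, ?_⟩
        have h1 : #(↥(T ∪ ⋃ v ∈ T, {w ∈ W | G.Adj v w})) ≤
            #T + #(↥(⋃ v ∈ T, {w ∈ W | G.Adj v w})) := mk_union_le _ _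
        have h2 : #(↥(⋃ v ∈ T, {w ∈ W | G.Adj v w})) ≤
            #T * ⨆ v : T, #{w ∈ W | G.Adj (v : V) w} := mk_biUnion_le _ _
        have h3 : (⨆ v : T, #{w ∈ W | G.Adj (v : V) w}) ≤ ρ := ciSup_le' fun v => (hTC v.2).2
        calc #(↥(T ∪ ⋃ v ∈ T, {w ∈ W | G.Adj v w}))
            ≤ #T + #T * ρ := h1.trans (add_le_add_right (h2.trans (mul_le_mul_right h3 _)) _)
          _ = t + t * ρ := by rw [hTcard]
          _ < κ := Cardinal.add_lt_of_lt hκ htκ (Cardinal.mul_lt_of_lt hκ htκ hρ)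
      -- cofinal family
      obtain ⟨ι, f, hlsub, hι⟩ := Ordinal.exists_lsub_cof κ.ord
      set L := (κ.ord.cof).ord.ToType with hL
      have hLcard : #L = κ.ord.cof := by rw [hL, Cardinal.mk_toType, Cardinal.card_ord]
      obtain ⟨e⟩ : Nonempty (L ≃ ι) := by
        rw [← Cardinal.eq, hLcard, hι]
      set t : L → Cardinal.{u} := fun j => max (f (e j)).card ℵ₀ with hts
      have htκ : ∀ j, t j < κ := fun j =>
        max_lt (Cardinal.lt_ord.mp (by rw [← hlsub]; exact Ordinal.lt_lsub f (e j))) hω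
      have htinf : ∀ j, ℵ₀ ≤ t j := fun j => le_max_right _ _
      set cls : Set V → Set V := fun T => T ∪ ⋃ v ∈ T, {w ∈ W | G.Adj v w} with hcls
      have wf : WellFounded ((· < ·) : L → L → Prop) := wellFounded_lt
      set T : L → Set V := WellFounded.fix wf (fun j ih =>
        if h : #(↥(⋃ i : {i : L // i < j}, cls (ih i.1 i.2))) < κ then
          Classical.choose (step (t j) (htinf j) (htκ j) _ h) else ∅) with hT
      have Teq : ∀ j, T j = if h : #(↥(⋃ i : {i : L // i < j}, cls (T i.1))) < κ then
          Classical.choose (step (t j) (htinf j) (htκ j) _ h) else ∅ := fun j => by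
        rw [hT]; exact WellFounded.fix_eq _ _ j
      have key : ∀ j : L, T j ⊆ W ∧ Disjoint (T j) (⋃ i : {i : L // i < j}, cls (T i.1)) ∧
          (T j).Pairwise (fun a b => ¬G.Adj a b) ∧ #(T j) = t j ∧ #(↥(cls (T j))) < κ := by
        intro j
        refine wf.induction (C := fun j => T j ⊆ W ∧
          Disjoint (T j) (⋃ i : {i : L // i < j}, cls (T i.1)) ∧
          (T j).Pairwise (fun a b => ¬G.Adj a b) ∧ #(T j) = t j ∧ #(↥(cls (T j))) < κ) j ?_
        intro j ihP
        have h1 : #{i : L // i < j} < κ.ord.cof := by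
          have := Cardinal.mk_Iio_ord_toType (c := κ.ord.cof) j
          exact this
        have hF : #(↥(⋃ i : {i : L // i < j}, cls (T i.1))) < κ := by
          apply lt_of_le_of_lt (mk_iUnion_le _)
          exact Cardinal.mul_lt_of_lt hκ (h1.trans_le (Ordinal.cof_ord_le κ))
            (edm_sup_lt h1 fun i => (ihP i.1 i.2).2.2.2.2)
        rw [Teq j, dif_pos hF]
        obtain ⟨hs1, hs2, hs3, hs4, hs5⟩ :=
          Classical.choose_spec (step (t j) (htinf j) (htκ j) _ hF)
        exact ⟨hs1, hs2, hs3, hs4, hs5⟩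
      set S := ⋃ j : L, T j with hS
      have hSW : S ⊆ W := iUnion_subset fun j => (key j).1
      refine ⟨S, hSW.trans hWA, ?_, ?_⟩
      · have hle : #S ≤ κ := hWκ ▸ mk_le_mk_of_subset hSW
        have hsup : κ ≤ ⨆ j, t j := by
          by_contra hlt
          push_neg at hlt
          have hsucc := hlimit _ hlt
          have hord : κ.ord ≤ (Order.succ (⨆ j, t j)).ord := by
            rw [← hlsub]
            refine Ordinal.lsub_le fun i => Cardinal.lt_ord.mpr ?_
            have heq1 : (f i).card ≤ t (e.symm i) := by
              rw [hts]
              simp only [Equiv.apply_symm_apply]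
              exact le_max_left _ _
            exact (heq1.trans (le_ciSup (Cardinal.bddAbove_range _) (e.symm i))).trans_lt
              (Order.lt_succ _)
          rw [Cardinal.ord_le_ord] at hord
          exact absurd (hord.trans_lt hsucc) (lt_irrefl κ)
        have hge : (⨆ j, t j) ≤ #S := by
          refine ciSup_le' fun j => ?_
          rw [← (key j).2.2.2.1]
          exact mk_le_mk_of_subset (subset_iUnion T j)
        exact le_antisymm hle (hsup.trans hge)
      · intro x hx y hy hxy
        obtain ⟨j1, hx⟩ := mem_iUnion.mp hx
        obtain ⟨j2, hy⟩ := mem_iUnion.mp hy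
        rcases lt_trichotomy j1 j2 with h | h | h
        · intro hadj
          have hyW : y ∈ W := (key j2).1 hy
          have hycls : y ∈ cls (T j1) :=
            Or.inr (mem_biUnion hx ⟨hyW, hadj⟩)
          exact Set.disjoint_left.mp (key j2).2.1 hy
            (mem_iUnion.mpr ⟨⟨j1, h⟩, hycls⟩)
        · subst h
          exact (key j1).2.2.1 hx hy hxy
        · intro hadj
          have hxW : x ∈ W := (key j1).1 hx
          have hxcls : x ∈ cls (T j2) :=
            Or.inr (mem_biUnion hy ⟨hxW, hadj.symm⟩)
          exact Set.disjoint_left.mp (key j1).2.1 hx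
            (mem_iUnion.mpr ⟨⟨j2, h⟩, hxcls⟩)

end EDMHelpers

/-- Erdős–Dushnik–Miller: an infinite graph with no independent set of full
cardinality contains an infinite complete subgraph. -/
theorem erdos_dushnik_miller {V : Type*} [Infinite V] (G : SimpleGraph V)
    (h : ¬∃ S : Set V, #S = #V ∧ S.Pairwise fun a b => ¬G.Adj a b) :
    ∃ H : Set V, H.Infinite ∧ H.Pairwise G.Adj := by
  by_contra hno
  push_neg at hno
  obtain ⟨S, -, hScard, hSind⟩ := edm_key (#V) V G Set.univ (Cardinal.aleph0_le_mk V)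
    Cardinal.mk_univ (fun H _ hinf hpair => hno H hinf hpair)
  exact h ⟨S, hScard, hSind⟩
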